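/- Let w be a C² function with w ≥ 1 and define w_ε = w/(1+εw) for ε > 0. Suppose there exist constants η, c₂, c₃ > 0 and a function W₁ ≥ 1 such that |Q∇w| ≤ c₂ W₁^(1/(2k)), |QD²w| ≤ c₃ W₁^(1/k), and ⟨Qξ,ξ⟩ ≥ η|ξ|². Then |QD²w_ε| ≤ (c₃ + 2η^(−1)c₂²) W₁^(1/k). -/

import Mathlib

open Matrix

/-- Euclidean norm of a vector. -/
noncomputable def vnorm {d : ℕ} (v : Fin d → ℝ) : ℝ := Real.sqrt (∑ i, v i ^ 2)

/-- Frobenius norm of a matrix. -/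
noncomputable def fnorm {d : ℕ} (M : Matrix (Fin d) (Fin d) ℝ) : ℝ :=
  Real.sqrt (∑ i, ∑ j, M i j ^ 2)

/-- Partial derivative in the `i`-th coordinate direction. -/
noncomputable def pd {d : ℕ} (i : Fin d) (f : (Fin d → ℝ) → ℝ) (x : Fin d → ℝ) : ℝ :=
  deriv (fun t => f (Function.update x i t)) (x i)

/-- Hessian matrix of a function. -/
noncomputable def hess {d : ℕ} (f : (Fin d → ℝ) → ℝ) (x : Fin d → ℝ) :
    Matrix (Fin d) (Fin d) ℝ :=
  Matrix.of fun i j => pd i (fun y => pd j f y) x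

/-! ### Auxiliary norm lemmas -/

lemma vnorm_eq_norm {d : ℕ} (v : Fin d → ℝ) :
    vnorm v = ‖(WithLp.equiv 2 (Fin d → ℝ)).symm v‖ := by
  rw [EuclideanSpace.norm_eq, vnorm]
  congr 1
  refine Finset.sum_congr rfl fun i _ => ?_
  simp [Real.norm_eq_abs, sq_abs]

lemma vnorm_nonneg {d : ℕ} (v : Fin d → ℝ) : 0 ≤ vnorm v := Real.sqrt_nonneg _

noncomputable def matemb {d : ℕ} (M : Matrix (Fin d) (Fin d) ℝ) :
    EuclideanSpace ℝ (Fin d × Fin d) :=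
  (WithLp.equiv 2 (Fin d × Fin d → ℝ)).symm (fun p => M p.1 p.2)

lemma fnorm_eq_norm {d : ℕ} (M : Matrix (Fin d) (Fin d) ℝ) : fnorm M = ‖matemb M‖ := by
  rw [EuclideanSpace.norm_eq, fnorm, Fintype.sum_prod_type]
  congr 1
  refine Finset.sum_congr rfl fun i _ => Finset.sum_congr rfl fun j _ => ?_
  simp [matemb, Real.norm_eq_abs, sq_abs]

lemma fnorm_add_le {d : ℕ} (A B : Matrix (Fin d) (Fin d) ℝ) :
    fnorm (A + B) ≤ fnorm A + fnorm B := by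
  rw [fnorm_eq_norm, fnorm_eq_norm, fnorm_eq_norm]
  have : matemb (A + B) = matemb A + matemb B := rfl
  rw [this]
  exact norm_add_le _ _

lemma fnorm_smul {d : ℕ} (c : ℝ) (M : Matrix (Fin d) (Fin d) ℝ) :
    fnorm (c • M) = |c| * fnorm M := by
  rw [fnorm_eq_norm, fnorm_eq_norm]
  have : matemb (c • M) = c • matemb M := rfl
  rw [this, norm_smul, Real.norm_eq_abs]

lemma fnorm_nonneg {d : ℕ} (M : Matrix (Fin d) (Fin d) ℝ) : 0 ≤ fnorm M :=
  Real.sqrt_nonneg _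

lemma dot_le_vnorm_mul {d : ℕ} (u v : Fin d → ℝ) : u ⬝ᵥ v ≤ vnorm u * vnorm v := by
  rw [vnorm_eq_norm, vnorm_eq_norm]
  have h := real_inner_le_norm ((WithLp.equiv 2 (Fin d → ℝ)).symm u)
    ((WithLp.equiv 2 (Fin d → ℝ)).symm v)
  refine le_trans (le_of_eq ?_) h
  rw [PiLp.inner_apply]
  simp [dotProduct, mul_comm]

lemma fnorm_outer {d : ℕ} (u v : Fin d → ℝ) :
    fnorm (Matrix.of fun i j => u i * v j) = vnorm u * vnorm v := by
  rw [fnorm, vnorm, vnorm, ← Real.sqrt_mul (by positivity)]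
  congr 1
  rw [Finset.sum_mul]
  refine Finset.sum_congr rfl fun i _ => ?_
  rw [Finset.mul_sum]
  refine Finset.sum_congr rfl fun j _ => ?_
  simp [mul_pow]

/-! ### Auxiliary calculus lemmas -/

lemma pd_hasDerivAt {d : ℕ} {f : (Fin d → ℝ) → ℝ} (hf : Differentiable ℝ f)
    (i : Fin d) (x : Fin d → ℝ) :
    HasDerivAt (fun t => f (Function.update x i t)) (pd i f x) (x i) := by
  have h1 : HasFDerivAt f (fderiv ℝ f x) (Function.update x i (x i)) := by
    rw [Function.update_eq_self]; exact (hf x).hasFDerivAt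
  have h := h1.comp_hasDerivAt (x i) (hasDerivAt_update x i (x i))
  have hd : DifferentiableAt ℝ (fun t => f (Function.update x i t)) (x i) :=
    h.differentiableAt
  exact hd.hasDerivAt

lemma pd_eq_fderiv {d : ℕ} {f : (Fin d → ℝ) → ℝ} (hf : Differentiable ℝ f)
    (i : Fin d) (x : Fin d → ℝ) :
    pd i f x = fderiv ℝ f x (Pi.single i 1) := by
  have h1 : HasFDerivAt f (fderiv ℝ f x) (Function.update x i (x i)) := by
    rw [Function.update_eq_self]; exact (hf x).hasFDerivAt
  exact (h1.comp_hasDerivAt (x i) (hasDerivAt_update x i (x i))).deriv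

lemma pd_differentiable {d : ℕ} {w : (Fin d → ℝ) → ℝ} (hw : ContDiff ℝ 2 w) (j : Fin d) :
    Differentiable ℝ (fun y => pd j w y) := by
  have hwd : Differentiable ℝ w := hw.differentiable (by norm_num)
  have heq : (fun y => pd j w y) = fun y => fderiv ℝ w y (Pi.single j 1) :=
    funext fun y => pd_eq_fderiv hwd j y
  rw [heq]
  have h1 : Differentiable ℝ (fderiv ℝ w) :=
    (hw.fderiv_right (m := 1) (by norm_num)).differentiable (by norm_num)
  exact (ContinuousLinearMap.apply ℝ ℝ ((Pi.single j 1 : (Fin d → ℝ)))).differentiable.comp h1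

lemma hess_hasDerivAt {d : ℕ} {w : (Fin d → ℝ) → ℝ} (hw : ContDiff ℝ 2 w)
    (i j : Fin d) (x : Fin d → ℝ) :
    HasDerivAt (fun t => pd j w (Function.update x i t)) (hess w x i j) (x i) :=
  pd_hasDerivAt (pd_differentiable hw j) i x

lemma pd_weps {d : ℕ} {ε : ℝ} (hε : 0 < ε) {w : (Fin d → ℝ) → ℝ} (hw : ContDiff ℝ 2 w)
    (hw1 : ∀ x, 1 ≤ w x) (j : Fin d) (y : Fin d → ℝ) :
    pd j (fun z => w z / (1 + ε * w z)) y = ((1 + ε * w y) ^ 2)⁻¹ * pd j w y := by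
  have hwy : (0:ℝ) < 1 + ε * w y := by nlinarith [hw1 y]
  have hu : HasDerivAt (fun t => w (Function.update y j t)) (pd j w y) (y j) :=
    pd_hasDerivAt (hw.differentiable (by norm_num)) j y
  have hg : HasDerivAt (fun s : ℝ => s / (1 + ε * s)) (((1 + ε * w y) ^ 2)⁻¹) (w y) := by
    have h2 : HasDerivAt (fun s : ℝ => 1 + ε * s) ε (w y) := by
      simpa using ((hasDerivAt_id (w y)).const_mul ε).const_add 1
    have h := (hasDerivAt_id (w y)).fun_div h2 hwy.ne'
    refine h.congr_deriv ?_
    show (1 * (1 + ε * w y) - w y * ε) / (1 + ε * w y) ^ 2 = _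
    rw [inv_eq_one_div]; congr 1; ring
  rw [← Function.update_eq_self j y] at hg
  have hcomp := hg.comp (y j) hu
  rw [Function.update_eq_self] at hg
  simpa [pd, Function.comp_def, Function.update_eq_self] using hcomp.deriv

lemma hess_weps {d : ℕ} {ε : ℝ} (hε : 0 < ε) {w : (Fin d → ℝ) → ℝ} (hw : ContDiff ℝ 2 w)
    (hw1 : ∀ x, 1 ≤ w x) (x : Fin d → ℝ) (i j : Fin d) :
    hess (fun z => w z / (1 + ε * w z)) x i j
      = ((1 + ε * w x) ^ 2)⁻¹ * hess w x i j
        - 2 * ε * ((1 + ε * w x) ^ 3)⁻¹ * pd i w x * pd j w x := by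
  have key : (fun y => pd j (fun z => w z / (1 + ε * w z)) y)
      = fun y => ((1 + ε * w y) ^ 2)⁻¹ * pd j w y :=
    funext fun y => pd_weps hε hw hw1 j y
  have hspos : ∀ y : Fin d → ℝ, (0:ℝ) < 1 + ε * w y := fun y => by nlinarith [hw1 y]
  show pd i (fun y => pd j (fun z => w z / (1 + ε * w z)) y) x = _
  rw [key]
  have hu : HasDerivAt (fun t => w (Function.update x i t)) (pd i w x) (x i) :=
    pd_hasDerivAt (hw.differentiable (by norm_num)) i x
  have hs : HasDerivAt (fun t => 1 + ε * w (Function.update x i t)) (ε * pd i w x) (x i) := by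
    simpa using (hu.const_mul ε).const_add 1
  have hsq : HasDerivAt (fun t => (1 + ε * w (Function.update x i t)) ^ 2)
      (2 * (1 + ε * w x) ^ 1 * (ε * pd i w x)) (x i) := by
    have := hs.fun_pow 2
    simpa [Function.update_eq_self] using this
  have hinv : HasDerivAt (fun t => ((1 + ε * w (Function.update x i t)) ^ 2)⁻¹)
      (-(2 * (1 + ε * w x) ^ 1 * (ε * pd i w x)) / ((1 + ε * w x) ^ 2) ^ 2) (x i) := by
    have := hsq.fun_inv (by have := hspos (Function.update x i (x i)); positivity)
    simpa [Function.update_eq_self] using this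
  have hH := hess_hasDerivAt hw i j x
  have htot := hinv.fun_mul hH
  have hderiv := htot.deriv
  rw [Function.update_eq_self] at hderiv
  have hpd : pd i (fun y => ((1 + ε * w y) ^ 2)⁻¹ * pd j w y) x
      = deriv (fun t => ((1 + ε * w (Function.update x i t)) ^ 2)⁻¹
          * pd j w (Function.update x i t)) (x i) := rfl
  rw [hpd, hderiv]
  have h1 : (0:ℝ) < 1 + ε * w x := hspos x
  field_simp
  ring

theorem stmt9 (d : ℕ) (η c₂ c₃ k ε : ℝ) (hη : 0 < η) (hc₂ : 0 < c₂) (hc₃ : 0 < c₃)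
    (hk : 0 < k) (hε : 0 < ε)
    (Q : (Fin d → ℝ) → Matrix (Fin d) (Fin d) ℝ)
    (w W₁ : (Fin d → ℝ) → ℝ) (hw : ContDiff ℝ 2 w)
    (hw1 : ∀ x, 1 ≤ w x) (hW₁ : ∀ x, 1 ≤ W₁ x)
    (hsymm : ∀ x, (Q x).IsSymm)
    (hell : ∀ (x ξ : Fin d → ℝ), η * vnorm ξ ^ 2 ≤ (Q x).mulVec ξ ⬝ᵥ ξ)
    (hQg : ∀ x, vnorm ((Q x).mulVec (fun i => pd i w x)) ≤ c₂ * W₁ x ^ (1 / (2 * k)))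
    (hQH : ∀ x, fnorm (Q x * hess w x) ≤ c₃ * W₁ x ^ (1 / k)) :
    ∀ x, fnorm (Q x * hess (fun y => w y / (1 + ε * w y)) x)
      ≤ (c₃ + 2 * η⁻¹ * c₂ ^ 2) * W₁ x ^ (1 / k) := by
  intro x
  set p : Fin d → ℝ := fun i => pd i w x with hp
  set P : Fin d → ℝ := (Q x).mulVec p with hP
  set s : ℝ := 1 + ε * w x with hs
  have hs1 : (1:ℝ) + ε ≤ s := by have := hw1 x; nlinarith
  have hspos : (0:ℝ) < s := by linarith
  -- matrix decomposition
  have hmat : Q x * hess (fun y => w y / (1 + ε * w y)) x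
      = (s ^ 2)⁻¹ • (Q x * hess w x)
        + (-(2 * ε * (s ^ 3)⁻¹)) • Matrix.of (fun i j => P i * p j) := by
    ext i j
    simp only [Matrix.mul_apply, Matrix.add_apply, Matrix.smul_apply, Matrix.of_apply,
      smul_eq_mul, hP, Matrix.mulVec, dotProduct]
    calc ∑ m, Q x i m * hess (fun y => w y / (1 + ε * w y)) x m j
        = ∑ m, ((s ^ 2)⁻¹ * (Q x i m * hess w x m j)
            + (-(2 * ε * (s ^ 3)⁻¹)) * ((Q x i m * p m) * p j)) := by
          refine Finset.sum_congr rfl fun m _ => ?_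
          rw [hess_weps hε hw hw1 x m j]
          simp only [hp, hs]
          ring
      _ = (s ^ 2)⁻¹ * ∑ m, Q x i m * hess w x m j
            + (-(2 * ε * (s ^ 3)⁻¹)) * ((∑ m, Q x i m * p m) * p j) := by
          rw [Finset.sum_add_distrib, ← Finset.mul_sum, ← Finset.mul_sum, ← Finset.sum_mul]
  rw [hmat]
  -- norm estimates
  have hW0 : (0:ℝ) < W₁ x := lt_of_lt_of_le one_pos (hW₁ x)
  have hWk : (W₁ x ^ (1 / (2 * k))) ^ 2 = W₁ x ^ (1 / k) := by
    rw [← Real.rpow_natCast (W₁ x ^ (1 / (2 * k))) 2, ← Real.rpow_mul hW0.le]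
    congr 1
    push_cast
    field_simp
  have hvp : vnorm p ≤ η⁻¹ * vnorm P := by
    have h1 := hell x p
    have h2 := dot_le_vnorm_mul P p
    rcases eq_or_lt_of_le (vnorm_nonneg p) with h0 | h0
    · rw [← h0]
      exact mul_nonneg (inv_nonneg.mpr hη.le) (vnorm_nonneg P)
    · have h3 : η * vnorm p ≤ vnorm P := by nlinarith
      have h4 := mul_le_mul_of_nonneg_left h3 (inv_nonneg.mpr hη.le)
      calc vnorm p = η⁻¹ * (η * vnorm p) := by field_simp
        _ ≤ η⁻¹ * vnorm P := h4
  have houter : fnorm (Matrix.of (fun i j => P i * p j)) ≤ η⁻¹ * (c₂ * W₁ x ^ (1 / (2 * k))) ^ 2 := by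
    rw [fnorm_outer]
    have hPle := hQg x
    have hPn := vnorm_nonneg P
    calc vnorm P * vnorm p ≤ vnorm P * (η⁻¹ * vnorm P) := by
          exact mul_le_mul_of_nonneg_left hvp hPn
      _ = η⁻¹ * vnorm P ^ 2 := by ring
      _ ≤ η⁻¹ * (c₂ * W₁ x ^ (1 / (2 * k))) ^ 2 := by
          have : vnorm P ^ 2 ≤ (c₂ * W₁ x ^ (1 / (2 * k))) ^ 2 := by nlinarith
          exact mul_le_mul_of_nonneg_left this (by positivity)
  have hc1 : |(s ^ 2)⁻¹| ≤ 1 := by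
    rw [abs_of_nonneg (by positivity)]
    rw [inv_le_one_iff₀]
    right; nlinarith
  have hc2 : |(-(2 * ε * (s ^ 3)⁻¹))| ≤ 2 := by
    rw [abs_neg, abs_of_nonneg (by positivity)]
    have hse : ε ≤ s ^ 3 := by nlinarith
    rw [mul_inv_le_iff₀ (by positivity)]
    nlinarith
  calc fnorm ((s ^ 2)⁻¹ • (Q x * hess w x)
        + (-(2 * ε * (s ^ 3)⁻¹)) • Matrix.of (fun i j => P i * p j))
      ≤ fnorm ((s ^ 2)⁻¹ • (Q x * hess w x))
        + fnorm ((-(2 * ε * (s ^ 3)⁻¹)) • Matrix.of (fun i j => P i * p j)) :=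
        fnorm_add_le _ _
    _ = |(s ^ 2)⁻¹| * fnorm (Q x * hess w x)
        + |(-(2 * ε * (s ^ 3)⁻¹))| * fnorm (Matrix.of (fun i j => P i * p j)) := by
        rw [fnorm_smul, fnorm_smul]
    _ ≤ 1 * (c₃ * W₁ x ^ (1 / k)) + 2 * (η⁻¹ * (c₂ * W₁ x ^ (1 / (2 * k))) ^ 2) := by
        have h1 := hQH x
        have h2 := fnorm_nonneg (Q x * hess w x)
        have h3 := fnorm_nonneg (Matrix.of (fun i j => P i * p j))
        have hb1 : |(s ^ 2)⁻¹| * fnorm (Q x * hess w x) ≤ 1 * (c₃ * W₁ x ^ (1 / k)) := by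
          rw [one_mul]
          exact mul_le_mul hc1 h1 h2 one_pos.le |>.trans (by rw [one_mul])
        have hb2 : |(-(2 * ε * (s ^ 3)⁻¹))| * fnorm (Matrix.of (fun i j => P i * p j))
            ≤ 2 * (η⁻¹ * (c₂ * W₁ x ^ (1 / (2 * k))) ^ 2) :=
          mul_le_mul hc2 houter h3 (by norm_num)
        linarith
    _ = (c₃ + 2 * η⁻¹ * c₂ ^ 2) * W₁ x ^ (1 / k) := by
        rw [mul_pow, hWk]
        ring
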